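/- In the modified Frege method with m ≥ 2 candidates, for every candidate j and every time t ≥ 1 it holds that s_j^t - p_j^t > -1. -/
import Mathlib


open Finset Filter

/-- In the modified Frege method, s_j^t - p_j^t > -1 for all candidates and times. -/
theorem modified_frege_score_lower_bound (m : ℕ) (hm : 2 ≤ m)
    (p s : ℕ → Fin m → ℝ) (w : ℕ → Fin m)
    (hp0 : ∀ t j, 0 ≤ p t j)
    (hpsum : ∀ t, 1 ≤ t → ∑ j, p t j = 1)
    (hs1 : ∀ j, s 1 j = p 1 j)
    (hsrec : ∀ t, 1 ≤ t → ∀ j,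
      s (t + 1) j = s t j + p (t + 1) j - (if w t = j then 1 else 0))
    (hw : ∀ t, 1 ≤ t → ∀ j, s t j ≤ s t (w t)) :
    ∀ t, 1 ≤ t → ∀ j, -1 < s t j - p t j := by
  have hsum : ∀ t, 1 ≤ t → ∑ j, s t j = 1 := by
    intro t ht
    induction t, ht using Nat.le_induction with
    | base =>
      rw [Finset.sum_congr rfl fun j _ => hs1 j]
      exact hpsum 1 le_rfl
    | succ t ht ih =>
      rw [Finset.sum_congr rfl fun j _ => hsrec t ht j]
      rw [Finset.sum_sub_distrib, Finset.sum_add_distrib, ih,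
        hpsum (t+1) (by omega), Finset.sum_ite_eq]
      simp
  have hwpos : ∀ t, 1 ≤ t → 0 < s t (w t) := by
    intro t ht
    by_contra h
    push_neg at h
    have hle : ∑ j, s t j ≤ ∑ _j : Fin m, (0:ℝ) :=
      Finset.sum_le_sum fun j _ => (hw t ht j).trans h
    rw [hsum t ht] at hle
    simp at hle
    linarith
  intro t ht
  induction t, ht using Nat.le_induction with
  | base => intro j; rw [hs1]; norm_num
  | succ t ht ih =>
    intro j
    rw [hsrec t ht j]
    by_cases h : w t = j
    · have := hwpos t ht
      rw [h] at this
      simp only [h, if_pos]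
      linarith
    · have h1 := ih j
      have h2 := hp0 t j
      simp only [h, if_neg, if_false]
      linarith
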